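/- Let f : ℝ → (0,∞) be continuous, 1-periodic, even, differentiable on (0,1), and suppose there exist constants C > 0 and ε > 0 with f(t) ≤ f(0) − Ct for all 0 ≤ t < ε. If X = {x^0,…,x^{N−1}} ⊆ 𝕋^d is a local minimizer of the tensor product energy E_F (with respect to the product metric on (𝕋^d)^N), then x_i^k ≠ x_i^ℓ for all coordinates i = 1,…,d and all k ≠ ℓ; i.e. all points of X have pairwise distinct coordinates in every coordinate direction. -/

import Mathlib

open Finset Real

/-- Tensor product energy of `N` points in `𝕋^d ≃ [0,1)^d`:
`E_F(X) = Σ_{k ≠ ℓ} ∏_i f(x_i^k − x_i^ℓ)`. -/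
noncomputable def energyProd {N d : ℕ} (f : ℝ → ℝ) (x : Fin N → Fin d → ℝ) : ℝ :=
  ∑ k : Fin N, ∑ ℓ : Fin N, if k = ℓ then 0 else ∏ i : Fin d, f (x k i - x ℓ i)

lemma energy_split {N d : ℕ} (f : ℝ → ℝ) (z : Fin N → Fin d → ℝ) (k : Fin N) :
    energyProd f z
      = (∑ a ∈ Finset.univ.erase k, ∑ b ∈ Finset.univ.erase k,
          if a = b then 0 else ∏ j : Fin d, f (z a j - z b j))
        + ∑ m ∈ Finset.univ.erase k, ∏ j : Fin d, f (z k j - z m j)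
        + ∑ m ∈ Finset.univ.erase k, ∏ j : Fin d, f (z m j - z k j) := by
  classical
  unfold energyProd
  rw [← Finset.add_sum_erase _ _ (Finset.mem_univ k)]
  rw [← Finset.add_sum_erase _ (fun b => if k = b then 0 else ∏ j : Fin d, f (z k j - z b j))
    (Finset.mem_univ k)]
  rw [if_pos rfl, zero_add]
  have h1 : ∑ b ∈ Finset.univ.erase k, (if k = b then 0 else ∏ j : Fin d, f (z k j - z b j))
      = ∑ m ∈ Finset.univ.erase k, ∏ j : Fin d, f (z k j - z m j) := by
    refine Finset.sum_congr rfl fun b hb => ?_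
    rw [if_neg (Finset.ne_of_mem_erase hb).symm]
  have h2 : ∀ a ∈ Finset.univ.erase k,
      (∑ b : Fin N, if a = b then 0 else ∏ j : Fin d, f (z a j - z b j))
      = (∏ j : Fin d, f (z a j - z k j))
        + ∑ b ∈ Finset.univ.erase k, if a = b then 0 else ∏ j : Fin d, f (z a j - z b j) := by
    intro a ha
    rw [← Finset.add_sum_erase _ _ (Finset.mem_univ k), if_neg (Finset.ne_of_mem_erase ha)]
  rw [h1, Finset.sum_congr rfl h2, Finset.sum_add_distrib]
  ring


/-- Local energy minimizers have pairwise distinct coordinates: if `f` is a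
continuous, 1-periodic, even, positive potential, differentiable on `(0,1)`,
with a sharp kink at the origin (`f(t) ≤ f(0) − Ct` for small `t ≥ 0`), and
`X` is a local minimizer of the tensor product energy `E_F` (with respect to
the product metric on `(𝕋^d)^N`), then all points of `X` have pairwise
distinct coordinates in every coordinate direction. -/
theorem localMin_energy_distinct_coordinates (N d : ℕ) (f : ℝ → ℝ)
    (hf_cont : Continuous f)
    (hf_per : Function.Periodic f 1)
    (hf_even : ∀ t, f t = f (1 - t))
    (hf_pos : ∀ t, 0 < f t)
    (hf_diff : DifferentiableOn ℝ f (Set.Ioo 0 1))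
    (C ε : ℝ) (hC : 0 < C) (hε : 0 < ε)
    (hf_kink : ∀ t : ℝ, 0 ≤ t → t < ε → f t ≤ f 0 - C * t)
    (x : Fin N → Fin d → ℝ) (hx : ∀ k i, x k i ∈ Set.Ico (0 : ℝ) 1)
    (hmin : IsLocalMin (fun y : Fin N → Fin d → ℝ => energyProd f y) x) :
    ∀ (i : Fin d) (k ℓ : Fin N), k ≠ ℓ → x k i ≠ x ℓ i := by
  classical
  intro i k ℓ hkl hco
  -- basic facts about f
  have hneg : ∀ s : ℝ, f (-s) = f s := by
    intro s
    rw [hf_even (-s), show (1 : ℝ) - -s = s + 1 by ring]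
    exact hf_per s
  have hdiffAt : ∀ s : ℝ, -1 < s → s < 1 → s ≠ 0 → DifferentiableAt ℝ f s := by
    intro s hs1 hs2 hs0
    rcases lt_or_gt_of_ne hs0 with h | h
    · have h1 : s + 1 ∈ Set.Ioo (0 : ℝ) 1 := ⟨by linarith, by linarith⟩
      have h2 : DifferentiableAt ℝ f (s + 1) :=
        (hf_diff (s + 1) h1).differentiableAt (isOpen_Ioo.mem_nhds h1)
      have h3 : DifferentiableAt ℝ (fun y : ℝ => f (y + 1)) s :=
        h2.comp s ((differentiable_id.add_const 1).differentiableAt)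
      have hfe : f = fun y : ℝ => f (y + 1) := funext fun y => (hf_per y).symm
      rw [hfe]; exact h3
    · exact (hf_diff s ⟨h, hs2⟩).differentiableAt (isOpen_Ioo.mem_nhds ⟨h, hs2⟩)
  -- coefficients
  set c : Fin N → ℝ := fun m => ∏ j ∈ Finset.univ.erase i, f (x k j - x m j) with hc
  have hcpos : ∀ m, 0 < c m := fun m => Finset.prod_pos fun j _ => hf_pos _
  -- the one-parameter family
  set u : ℝ → Fin N → Fin d → ℝ :=
    fun t => Function.update x k (Function.update (x k) i (x k i + t)) with hu
  set S : ℝ → ℝ := fun t => ∑ m ∈ Finset.univ.erase k, c m * f (x k i - x m i + t) with hS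
  have huk : ∀ t j, u t k j = if j = i then x k i + t else x k j := by
    intro t j
    rw [hu]
    simp only [Function.update_self]
    by_cases hj : j = i
    · subst hj; simp
    · simp [Function.update_of_ne hj, hj]
  have hum : ∀ t m, m ≠ k → u t m = x m := by
    intro t m hm
    rw [hu]; exact Function.update_of_ne hm _ _
  have hgt : ∀ t, energyProd f (u t)
      = (∑ a ∈ Finset.univ.erase k, ∑ b ∈ Finset.univ.erase k,
          if a = b then 0 else ∏ j : Fin d, f (x a j - x b j)) + 2 * S t := by
    intro t
    rw [energy_split f (u t) k]
    have e1 : (∑ a ∈ Finset.univ.erase k, ∑ b ∈ Finset.univ.erase k,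
          if a = b then 0 else ∏ j : Fin d, f (u t a j - u t b j))
        = ∑ a ∈ Finset.univ.erase k, ∑ b ∈ Finset.univ.erase k,
          if a = b then 0 else ∏ j : Fin d, f (x a j - x b j) := by
      refine Finset.sum_congr rfl fun a ha => Finset.sum_congr rfl fun b hb => ?_
      rw [hum t a (Finset.ne_of_mem_erase ha), hum t b (Finset.ne_of_mem_erase hb)]
    have e2 : (∑ m ∈ Finset.univ.erase k, ∏ j : Fin d, f (u t k j - u t m j)) = S t := by
      refine Finset.sum_congr rfl fun m hm => ?_
      rw [hum t m (Finset.ne_of_mem_erase hm)]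
      rw [← Finset.mul_prod_erase Finset.univ _ (Finset.mem_univ i)]
      have : ∀ j ∈ Finset.univ.erase i, f (u t k j - x m j) = f (x k j - x m j) := by
        intro j hj
        rw [huk t j, if_neg (Finset.ne_of_mem_erase hj)]
      rw [Finset.prod_congr rfl this, huk t i, if_pos rfl,
        show x k i + t - x m i = x k i - x m i + t by ring]
      exact mul_comm _ _
    have e3 : (∑ m ∈ Finset.univ.erase k, ∏ j : Fin d, f (u t m j - u t k j)) = S t := by
      refine Finset.sum_congr rfl fun m hm => ?_
      rw [hum t m (Finset.ne_of_mem_erase hm)]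
      rw [← Finset.mul_prod_erase Finset.univ _ (Finset.mem_univ i)]
      have : ∀ j ∈ Finset.univ.erase i, f (x m j - u t k j) = f (x k j - x m j) := by
        intro j hj
        rw [huk t j, if_neg (Finset.ne_of_mem_erase hj),
          show x m j - x k j = -(x k j - x m j) by ring, hneg]
      rw [Finset.prod_congr rfl this, huk t i, if_pos rfl,
        show x m i - (x k i + t) = -(x k i - x m i + t) by ring, hneg]
      exact mul_comm _ _
    rw [e1, e2, e3]; ring
  -- local min for S at 0
  have hu0 : u 0 = x := by
    rw [hu]
    simp [Function.update_eq_self]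
  have hucont : Continuous u := by
    rw [hu]
    exact continuous_const.update k (continuous_const.update i (continuous_const.add continuous_id))
  have hSmin : ∀ᶠ t in nhds (0 : ℝ), S 0 ≤ S t := by
    have htend : Filter.Tendsto u (nhds 0) (nhds x) := by
      have := hucont.continuousAt (x := (0 : ℝ))
      rwa [ContinuousAt, hu0] at this
    have hev : ∀ᶠ t in nhds (0 : ℝ), energyProd f x ≤ energyProd f (u t) := htend.eventually hmin
    refine hev.mono fun t ht => ?_
    have h0 := hgt 0
    rw [hu0] at h0
    rw [h0, hgt t] at ht
    linarith
  -- split into coincident and non-coincident parts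
  set A : Finset (Fin N) := (Finset.univ.erase k).filter (fun m => x m i = x k i) with hA
  set B : Finset (Fin N) := (Finset.univ.erase k).filter (fun m => ¬ x m i = x k i) with hB
  set cA : ℝ := ∑ m ∈ A, c m with hcA
  set SB : ℝ → ℝ := fun t => ∑ m ∈ B, c m * f (x k i - x m i + t) with hSB
  have hsplit : ∀ t, S t = cA * f t + SB t := by
    intro t
    have h0 : S t = (∑ m ∈ A, c m * f (x k i - x m i + t))
        + ∑ m ∈ B, c m * f (x k i - x m i + t) :=
      (Finset.sum_filter_add_sum_filter_not (Finset.univ.erase k)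
        (fun m => x m i = x k i) (fun m => c m * f (x k i - x m i + t))).symm
    rw [h0]
    have h1 : ∑ m ∈ A, c m * f (x k i - x m i + t) = cA * f t := by
      rw [hcA, Finset.sum_mul]
      refine Finset.sum_congr rfl fun m hm => ?_
      have hmi : x m i = x k i := (Finset.mem_filter.mp hm).2
      rw [show x k i - x m i + t = t by rw [hmi]; ring]
    rw [h1]
  have hcApos : 0 < cA := by
    have hmem : ℓ ∈ A :=
      Finset.mem_filter.mpr ⟨Finset.mem_erase.mpr ⟨Ne.symm hkl, Finset.mem_univ ℓ⟩, hco.symm⟩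
    exact Finset.sum_pos (fun m _ => hcpos m) ⟨ℓ, hmem⟩
  -- SB is differentiable at 0
  have hSBderiv : HasDerivAt SB (∑ m ∈ B, c m * deriv f (x k i - x m i)) 0 := by
    rw [hSB]
    refine HasDerivAt.fun_sum fun m hm => ?_
    have hmne : x m i ≠ x k i := (Finset.mem_filter.mp hm).2
    have hxk := hx k i; have hxm := hx m i
    have hd : DifferentiableAt ℝ f (x k i - x m i) :=
      hdiffAt _ (by linarith [hxk.1, hxk.2, hxm.1, hxm.2])
        (by linarith [hxk.1, hxk.2, hxm.1, hxm.2]) (sub_ne_zero.mpr fun h => hmne h.symm)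
    have hin : HasDerivAt (fun t : ℝ => x k i - x m i + t) 1 0 := by
      simpa using (hasDerivAt_id (0 : ℝ)).const_add (x k i - x m i)
    have hd' : HasDerivAt f (deriv f (x k i - x m i)) (x k i - x m i + 0) := by
      rw [add_zero]; exact hd.hasDerivAt
    have := (hd'.comp 0 hin).const_mul (c m)
    simpa using this
  set L : ℝ := ∑ m ∈ B, c m * deriv f (x k i - x m i) with hL
  -- slope bounds
  have hslope : Filter.Tendsto (slope SB 0) (nhdsWithin 0 {(0 : ℝ)}ᶜ) (nhds L) :=
    hasDerivAt_iff_tendsto_slope.mp hSBderiv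
  have hevε : ∀ᶠ t in nhds (0 : ℝ), |t| < ε ∧ S 0 ≤ S t := by
    refine Filter.Eventually.and ?_ hSmin
    have : Set.Ioo (-ε) ε ∈ nhds (0 : ℝ) := isOpen_Ioo.mem_nhds ⟨by linarith, hε⟩
    exact Filter.eventually_of_mem this fun t ht => abs_lt.mpr ⟨ht.1, ht.2⟩
  have hupper : cA * C ≤ L := by
    have hmono : nhdsWithin (0 : ℝ) (Set.Ioi 0) ≤ nhdsWithin (0 : ℝ) {(0 : ℝ)}ᶜ :=
      nhdsWithin_mono 0 fun y hy => Set.mem_compl_singleton_iff.mpr (ne_of_gt hy)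
    refine ge_of_tendsto (hslope.mono_left hmono) ?_
    filter_upwards [hevε.filter_mono nhdsWithin_le_nhds, self_mem_nhdsWithin] with t ht htmem
    have htpos : (0 : ℝ) < t := htmem
    have hft : f t ≤ f 0 - C * t := hf_kink t htpos.le (lt_of_abs_lt ht.1)
    have h1 : cA * f t ≤ cA * (f 0 - C * t) := mul_le_mul_of_nonneg_left hft hcApos.le
    have h2 := ht.2
    rw [hsplit t, hsplit 0] at h2
    rw [slope_def_field, sub_zero, le_div_iff₀ htpos]
    nlinarith
  have hlower : L ≤ -(cA * C) := by
    have hmono : nhdsWithin (0 : ℝ) (Set.Iio 0) ≤ nhdsWithin (0 : ℝ) {(0 : ℝ)}ᶜ :=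
      nhdsWithin_mono 0 fun y hy => Set.mem_compl_singleton_iff.mpr (ne_of_lt hy)
    refine le_of_tendsto (hslope.mono_left hmono) ?_
    filter_upwards [hevε.filter_mono nhdsWithin_le_nhds, self_mem_nhdsWithin] with t ht htmem
    have htneg : t < (0 : ℝ) := htmem
    have hft : f t ≤ f 0 + C * t := by
      have h1 : f t = f (-t) := (hneg t).symm
      have h2 : f (-t) ≤ f 0 - C * (-t) :=
        hf_kink (-t) (by linarith) (by have := abs_lt.mp ht.1; linarith)
      rw [h1]; linarith
    have h1 : cA * f t ≤ cA * (f 0 + C * t) := mul_le_mul_of_nonneg_left hft hcApos.le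
    have h2 := ht.2
    rw [hsplit t, hsplit 0] at h2
    rw [slope_def_field, sub_zero, div_le_iff_of_neg htneg]
    nlinarith
  nlinarith
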